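/- arXiv:2512.19721 — 5 statements merged into one kernel-verified Lean document; each statement's English description precedes it below -/
import Mathlib

section
/- The Tanimoto (min–max Jaccard) distance is a metric on the nonnegative orthant ℝ₊^d: for all u, v, w ∈ ℝ₊^d, d_Tan(u,v) ≥ 0 with d_Tan(u,v) = 0 if and only if u = v, d_Tan(u,v) = d_Tan(v,u), and d_Tan(u,w) ≤ d_Tan(u,v) + d_Tan(v,w). -/
open Finset

/-- Tanimoto (min–max Jaccard) similarity on nonnegative vectors:
`J_Tan(u,v) = (Σⱼ min uⱼ vⱼ) / (Σⱼ max uⱼ vⱼ)` when the denominator is positive,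
and `1` otherwise (which, for nonnegative vectors, happens exactly when `u = v = 0`). -/
noncomputable def JTan {ι : Type*} [Fintype ι] (u v : ι → ℝ) : ℝ :=
  if 0 < ∑ j, max (u j) (v j) then (∑ j, min (u j) (v j)) / (∑ j, max (u j) (v j)) else 1

/-- Tanimoto distance `d_Tan = 1 − J_Tan`. -/
noncomputable def dTan {ι : Type*} [Fintype ι] (u v : ι → ℝ) : ℝ := 1 - JTan u v

private lemma two_max (x y : ℝ) : 2 * max x y = x + y + |x - y| := by
  rcases le_total x y with h | h
  · rw [max_eq_right h, abs_of_nonpos (by linarith)]; ring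
  · rw [max_eq_left h, abs_of_nonneg (by linarith)]; ring

private lemma two_min (x y : ℝ) : 2 * min x y = x + y - |x - y| := by
  rcases le_total x y with h | h
  · rw [min_eq_left h, abs_of_nonpos (by linarith)]; ring
  · rw [min_eq_right h, abs_of_nonneg (by linarith)]; ring

private lemma sum_max_eq {d : ℕ} (u v : Fin d → ℝ) :
    ∑ j, max (u j) (v j)
      = (∑ j, u j + ∑ j, v j + ∑ j, |u j - v j|) / 2 := by
  rw [eq_div_iff (by norm_num : (2:ℝ) ≠ 0)]
  calc (∑ j, max (u j) (v j)) * 2 = ∑ j, (u j + v j + |u j - v j|) := by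
        rw [Finset.sum_mul]
        exact Finset.sum_congr rfl fun j _ => by rw [mul_comm]; exact two_max _ _
    _ = _ := by rw [Finset.sum_add_distrib, Finset.sum_add_distrib]

private lemma sum_min_eq {d : ℕ} (u v : Fin d → ℝ) :
    ∑ j, min (u j) (v j)
      = (∑ j, u j + ∑ j, v j - ∑ j, |u j - v j|) / 2 := by
  rw [eq_div_iff (by norm_num : (2:ℝ) ≠ 0)]
  calc (∑ j, min (u j) (v j)) * 2 = ∑ j, (u j + v j - |u j - v j|) := by
        rw [Finset.sum_mul]
        exact Finset.sum_congr rfl fun j _ => by rw [mul_comm]; exact two_min _ _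
    _ = _ := by rw [Finset.sum_sub_distrib, Finset.sum_add_distrib]

private lemma dTan_eq {d : ℕ} (u v : Fin d → ℝ)
    (h : 0 < ∑ j, max (u j) (v j)) :
    dTan u v = 2 * (∑ j, |u j - v j|)
        / (∑ j, u j + ∑ j, v j + ∑ j, |u j - v j|) := by
  have hmax := sum_max_eq u v
  have hmin := sum_min_eq u v
  rw [hmax] at h
  have h2 : 0 < ∑ j, u j + ∑ j, v j + ∑ j, |u j - v j| := by linarith
  rw [dTan, JTan, if_pos (by rw [hmax]; exact h), hmin, hmax]
  field_simp
  ring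

private lemma dTan_nonneg {d : ℕ} (u v : Fin d → ℝ) : 0 ≤ dTan u v := by
  rw [dTan, JTan]
  split_ifs with h
  · have hle : (∑ j, min (u j) (v j)) ≤ ∑ j, max (u j) (v j) :=
      Finset.sum_le_sum fun j _ => min_le_max
    have := (div_le_one h).mpr hle
    linarith
  · norm_num

private lemma dTan_self {d : ℕ} (u : Fin d → ℝ) : dTan u u = 0 := by
  rw [dTan, JTan]
  simp only [min_self, max_self]
  split_ifs with h
  · rw [div_self (ne_of_gt h)]; ring
  · ring

private lemma zero_of_not_pos {d : ℕ} (u v : Fin d → ℝ)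
    (hu : ∀ j, 0 ≤ u j) (hv : ∀ j, 0 ≤ v j)
    (h : ¬ 0 < ∑ j, max (u j) (v j)) : u = 0 ∧ v = 0 := by
  have h0 : ∑ j, max (u j) (v j) = 0 :=
    le_antisymm (not_lt.mp h)
      (Finset.sum_nonneg fun j _ => le_trans (hu j) (le_max_left _ _))
  have hall := (Finset.sum_eq_zero_iff_of_nonneg
      (fun j _ => le_trans (hu j) (le_max_left _ _))).mp h0
  constructor
  · funext j
    have := hall j (Finset.mem_univ j)
    have := le_max_left (u j) (v j)
    have := hu j
    simp only [Pi.zero_apply]; linarith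
  · funext j
    have := hall j (Finset.mem_univ j)
    have := le_max_right (u j) (v j)
    have := hv j
    simp only [Pi.zero_apply]; linarith

private lemma key (a b c p q r : ℝ) (ha : 0 ≤ a) (hb : 0 ≤ b)
    (hp : 0 ≤ p) (hr : 0 ≤ r)
    (hcab : c ≤ a + b) (hq1 : q ≤ r + b) (hq2 : q ≤ p + a)
    (h1 : 0 < p + q + a) (h2 : 0 < q + r + b) (h3 : 0 < p + r + c) :
    2 * c / (p + r + c) ≤ 2 * a / (p + q + a) + 2 * b / (q + r + b) := by
  have hab : 0 < p + r + (a + b) := by nlinarith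
  have step1 : 2 * c / (p + r + c) ≤ 2 * (a + b) / (p + r + (a + b)) := by
    rw [div_le_div_iff₀ h3 hab]
    nlinarith [mul_nonneg (sub_nonneg.mpr hcab) (add_nonneg hp hr)]
  have step2 : 2 * a / (p + r + (a + b)) ≤ 2 * a / (p + q + a) := by
    rw [div_le_div_iff₀ hab h1]
    nlinarith [mul_nonneg ha (by linarith : (0:ℝ) ≤ r + b - q)]
  have step3 : 2 * b / (p + r + (a + b)) ≤ 2 * b / (q + r + b) := by
    rw [div_le_div_iff₀ hab h2]
    nlinarith [mul_nonneg hb (by linarith : (0:ℝ) ≤ p + a - q)]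
  have e : 2 * (a + b) / (p + r + (a + b))
      = 2 * a / (p + r + (a + b)) + 2 * b / (p + r + (a + b)) := by ring
  linarith [step1, step2, step3, e.le]

/-- The Tanimoto distance is a metric on the nonnegative orthant `ℝ₊^d`:
nonnegativity, identity of indiscernibles, symmetry, and the triangle inequality. -/
theorem dTan_is_metric {d : ℕ} (u v w : Fin d → ℝ)
    (hu : ∀ j, 0 ≤ u j) (hv : ∀ j, 0 ≤ v j) (hw : ∀ j, 0 ≤ w j) :
    0 ≤ dTan u v ∧ (dTan u v = 0 ↔ u = v) ∧ dTan u v = dTan v u ∧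
      dTan u w ≤ dTan u v + dTan v w := by
  refine ⟨dTan_nonneg u v, ⟨?_, ?_⟩, ?_, ?_⟩
  · -- dTan u v = 0 → u = v
    intro h0
    by_cases h : 0 < ∑ j, max (u j) (v j)
    · rw [dTan, JTan, if_pos h] at h0
      have hMX : (∑ j, min (u j) (v j)) = ∑ j, max (u j) (v j) := by
        field_simp at h0
        linarith
      have hall := (Finset.sum_eq_sum_iff_of_le
          (fun j (_ : j ∈ Finset.univ) => (min_le_max : min (u j) (v j) ≤ max (u j) (v j)))).mp hMX
      funext j
      have hj := hall j (Finset.mem_univ j)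
      have h1 : u j ≤ v j := le_trans (le_max_left _ _) (hj ▸ min_le_right _ _)
      have h2 : v j ≤ u j := le_trans (le_max_right _ _) (hj ▸ min_le_left _ _)
      linarith
    · obtain ⟨hu0, hv0⟩ := zero_of_not_pos u v hu hv h
      rw [hu0, hv0]
  · -- u = v → dTan u v = 0
    rintro rfl
    exact dTan_self u
  · -- symmetry
    rw [dTan, dTan, JTan, JTan]
    simp_rw [min_comm (u _) (v _), max_comm (u _) (v _)]
  · -- triangle inequality
    by_cases h12 : 0 < ∑ j, max (u j) (v j)
    · by_cases h23 : 0 < ∑ j, max (v j) (w j)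
      · by_cases h13 : 0 < ∑ j, max (u j) (w j)
        · rw [dTan_eq u v h12, dTan_eq v w h23, dTan_eq u w h13]
          have hp : 0 ≤ ∑ j, u j := Finset.sum_nonneg fun j _ => hu j
          have hr : 0 ≤ ∑ j, w j := Finset.sum_nonneg fun j _ => hw j
          have ha : 0 ≤ ∑ j, |u j - v j| := Finset.sum_nonneg fun j _ => abs_nonneg _
          have hb : 0 ≤ ∑ j, |v j - w j| := Finset.sum_nonneg fun j _ => abs_nonneg _
          have hcab : (∑ j, |u j - w j|) ≤ (∑ j, |u j - v j|) + ∑ j, |v j - w j| := by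
            rw [← Finset.sum_add_distrib]
            exact Finset.sum_le_sum fun j _ => abs_sub_le _ _ _
          have hq1 : (∑ j, v j) ≤ (∑ j, w j) + ∑ j, |v j - w j| := by
            rw [← Finset.sum_add_distrib]
            refine Finset.sum_le_sum fun j _ => ?_
            have := le_abs_self (v j - w j); linarith
          have hq2 : (∑ j, v j) ≤ (∑ j, u j) + ∑ j, |u j - v j| := by
            rw [← Finset.sum_add_distrib]
            refine Finset.sum_le_sum fun j _ => ?_
            have := le_abs_self (v j - u j)
            have habs : |v j - u j| = |u j - v j| := abs_sub_comm _ _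
            linarith
          have h1 : 0 < ∑ j, u j + ∑ j, v j + ∑ j, |u j - v j| := by
            have := sum_max_eq u v; rw [this] at h12; linarith
          have h2 : 0 < ∑ j, v j + ∑ j, w j + ∑ j, |v j - w j| := by
            have := sum_max_eq v w; rw [this] at h23; linarith
          have h3 : 0 < ∑ j, u j + ∑ j, w j + ∑ j, |u j - w j| := by
            have := sum_max_eq u w; rw [this] at h13; linarith
          exact key _ _ _ _ _ _ ha hb hp hr hcab hq1 hq2 h1 h2 h3
        · have huw : dTan u w = 0 := by rw [dTan, JTan, if_neg h13]; ring
          rw [huw]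
          exact add_nonneg (dTan_nonneg u v) (dTan_nonneg v w)
      · obtain ⟨hv0, hw0⟩ := zero_of_not_pos v w hv hw h23
        have hvw : v = w := by rw [hv0, hw0]
        rw [← hvw, dTan_self]
        linarith [dTan_nonneg u v]
    · obtain ⟨hu0, hv0⟩ := zero_of_not_pos u v hu hv h12
      have huv : u = v := by rw [hu0, hv0]
      rw [huv, dTan_self]
      linarith [dTan_nonneg v w]
end

section
/- The peak-to-peak distance d_peak is a metric on ℝⁿ: for all A, B, C ∈ ℝⁿ, d_peak(A,B) ≥ 0 with d_peak(A,B) = 0 if and only if A = B, d_peak(A,B) = d_peak(B,A), and d_peak(A,C) ≤ d_peak(A,B) + d_peak(B,C). Moreover d_peak(A,B) = d_Tan(φ(A), φ(B)), the Tanimoto distance applied to the sign-split embeddings. -/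
open Finset

/-- Sign-split embedding `φ : ℝⁿ → ℝ₊^{2n}`, indexed by `Fin n × Fin 2`. -/
noncomputable def phi {n : ℕ} (X : Fin n → ℝ) : Fin n × Fin 2 → ℝ :=
  fun p => if p.2 = 0 then max (X p.1) 0 else max (-(X p.1)) 0

/-- Sign-aware intersection `N(A,B) = Σ_{i : AᵢBᵢ > 0} min |Aᵢ| |Bᵢ|`. -/
noncomputable def Npeak {n : ℕ} (A B : Fin n → ℝ) : ℝ :=
  ∑ i ∈ Finset.univ.filter (fun i => 0 < A i * B i), min |A i| |B i|

/-- Peak-to-peak union `U_peak(A,B) = Σᵢ (max Aᵢ⁺ Bᵢ⁺ + max Aᵢ⁻ Bᵢ⁻)`. -/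
noncomputable def Upeak {n : ℕ} (A B : Fin n → ℝ) : ℝ :=
  ∑ i, (max (max (A i) 0) (max (B i) 0) + max (max (-(A i)) 0) (max (-(B i)) 0))

/-- Peak-to-peak similarity `J_peak = N/U_peak` (and `1` when `U_peak = 0`). -/
noncomputable def Jpeak {n : ℕ} (A B : Fin n → ℝ) : ℝ :=
  if 0 < Upeak A B then Npeak A B / Upeak A B else 1

/-- Peak-to-peak distance `d_peak = 1 − J_peak`. -/
noncomputable def dpeak {n : ℕ} (A B : Fin n → ℝ) : ℝ := 1 - Jpeak A B

lemma key_s4 (a b : ℝ) :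
    min (max a 0) (max b 0) + min (max (-a) 0) (max (-b) 0)
      = if 0 < a * b then min |a| |b| else 0 := by
  rcases lt_trichotomy a 0 with ha|ha|ha
  · rcases lt_trichotomy b 0 with hb|hb|hb
    · rw [if_pos (mul_pos_of_neg_of_neg ha hb), max_eq_right ha.le, max_eq_right hb.le,
        max_eq_left (neg_nonneg.2 ha.le), max_eq_left (neg_nonneg.2 hb.le),
        abs_of_neg ha, abs_of_neg hb]
      simp
    · subst hb; simp [max_eq_right ha.le]
    · rw [if_neg (by nlinarith), max_eq_right ha.le, max_eq_left hb.le,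
        max_eq_right (neg_nonpos.2 hb.le)]
      simp [min_eq_right (neg_nonneg.2 ha.le), hb.le]
  · subst ha; simp
  · rcases lt_trichotomy b 0 with hb|hb|hb
    · rw [if_neg (by nlinarith), max_eq_left ha.le, max_eq_right hb.le,
        max_eq_right (neg_nonpos.2 ha.le)]
      simp [min_eq_right ha.le, min_eq_left (by linarith : (0:ℝ) ≤ -b)]
    · subst hb; simp [max_eq_left ha.le, ha.le]
    · rw [if_pos (mul_pos ha hb), max_eq_left ha.le, max_eq_left hb.le,
        max_eq_right (neg_nonpos.2 ha.le), max_eq_right (neg_nonpos.2 hb.le),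
        abs_of_pos ha, abs_of_pos hb]
      simp

lemma phi_nonneg {n : ℕ} (X : Fin n → ℝ) : ∀ j, 0 ≤ phi X j := by
  intro j
  unfold phi
  split_ifs <;> exact le_max_right _ _

lemma phi_inj {n : ℕ} (X Y : Fin n → ℝ) (h : phi X = phi Y) : X = Y := by
  funext i
  have h0 := congrFun h (i, 0)
  have h1 := congrFun h (i, 1)
  simp only [phi] at h0 h1
  norm_num at h0 h1
  have : max (X i) 0 - max (-(X i)) 0 = X i := by
    rcases le_total (X i) 0 with hx | hx
    · rw [max_eq_right hx, max_eq_left (neg_nonneg.2 hx)]; ring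
    · rw [max_eq_left hx, max_eq_right (neg_nonpos.2 hx)]; ring
  have that : max (Y i) 0 - max (-(Y i)) 0 = Y i := by
    rcases le_total (Y i) 0 with hx | hx
    · rw [max_eq_right hx, max_eq_left (neg_nonneg.2 hx)]; ring
    · rw [max_eq_left hx, max_eq_right (neg_nonpos.2 hx)]; ring
  rw [← this, ← that, h0, h1]

lemma sum_min_phi {n : ℕ} (A B : Fin n → ℝ) :
    ∑ j, min (phi A j) (phi B j) = Npeak A B := by
  rw [Npeak, Finset.sum_filter, Fintype.sum_prod_type]
  refine Finset.sum_congr rfl fun i _ => ?_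
  rw [Fin.sum_univ_two]
  simp only [phi]
  simpa using key_s4 (A i) (B i)

lemma sum_max_phi {n : ℕ} (A B : Fin n → ℝ) :
    ∑ j, max (phi A j) (phi B j) = Upeak A B := by
  rw [Upeak, Fintype.sum_prod_type]
  refine Finset.sum_congr rfl fun i _ => ?_
  rw [Fin.sum_univ_two]
  simp [phi]

lemma dpeak_eq_dTan {n : ℕ} (A B : Fin n → ℝ) : dpeak A B = dTan (phi A) (phi B) := by
  rw [dpeak, dTan, Jpeak, JTan, sum_min_phi, sum_max_phi]

lemma dTan_eq_s4 {ι : Type*} [Fintype ι] (u v : ι → ℝ) :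
    dTan u v = if 0 < ∑ j, max (u j) (v j)
      then (∑ j, |u j - v j|) / (∑ j, max (u j) (v j)) else 0 := by
  rw [dTan, JTan]
  split_ifs with h
  · rw [eq_div_iff (ne_of_gt h)]
    have hd : ∑ j, |u j - v j| = (∑ j, max (u j) (v j)) - ∑ j, min (u j) (v j) := by
      rw [← Finset.sum_sub_distrib]
      refine Finset.sum_congr rfl fun j _ => ?_
      rw [abs_sub_comm]
      exact (max_sub_min_eq_abs _ _).symm
    rw [hd]
    field_simp
  · ring

lemma dTan_nonneg_s4 {ι : Type*} [Fintype ι] (u v : ι → ℝ) : 0 ≤ dTan u v := by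
  rw [dTan_eq_s4]
  split_ifs with h
  · exact div_nonneg (Finset.sum_nonneg fun j _ => abs_nonneg _) h.le
  · exact le_refl 0

lemma sum_max_not_pos_iff {ι : Type*} [Fintype ι] (u v : ι → ℝ)
    (hu : ∀ j, 0 ≤ u j) (hv : ∀ j, 0 ≤ v j) :
    ¬ (0 < ∑ j, max (u j) (v j)) ↔ u = v ∧ u = 0 := by
  have hnn : ∀ j ∈ Finset.univ, (0:ℝ) ≤ max (u j) (v j) :=
    fun j _ => le_max_of_le_left (hu j)
  constructor
  · intro h
    have h0 : ∑ j, max (u j) (v j) = 0 :=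
      le_antisymm (not_lt.1 h) (Finset.sum_nonneg hnn)
    have hall := (Finset.sum_eq_zero_iff_of_nonneg hnn).1 h0
    have key0 : ∀ j, u j = 0 ∧ v j = 0 := by
      intro j
      have hj := hall j (Finset.mem_univ j)
      have h1 : u j ≤ 0 := hj ▸ le_max_left (u j) (v j)
      have h2 : v j ≤ 0 := hj ▸ le_max_right (u j) (v j)
      exact ⟨le_antisymm h1 (hu j), le_antisymm h2 (hv j)⟩
    constructor
    · funext j; rw [(key0 j).1, (key0 j).2]
    · funext j; exact (key0 j).1
  · rintro ⟨h1, h2⟩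
    subst h1; subst h2
    simp

lemma dTan_symm {ι : Type*} [Fintype ι] (u v : ι → ℝ) : dTan u v = dTan v u := by
  rw [dTan, dTan, JTan, JTan]
  simp [min_comm, max_comm]

lemma dTan_eq_zero_iff {ι : Type*} [Fintype ι] (u v : ι → ℝ)
    (hu : ∀ j, 0 ≤ u j) (hv : ∀ j, 0 ≤ v j) :
    dTan u v = 0 ↔ u = v := by
  rw [dTan_eq_s4]
  split_ifs with h
  · rw [div_eq_zero_iff]
    constructor
    · rintro (h1 | h1)
      · funext j
        have h2 := (Finset.sum_eq_zero_iff_of_nonneg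
            (fun j _ => abs_nonneg (u j - v j))).1 h1 j (Finset.mem_univ j)
        have h3 := abs_eq_zero.1 h2
        linarith
      · exact absurd h1 (ne_of_gt h)
    · intro h1; subst h1; simp
  · simp [((sum_max_not_pos_iff u v hu hv).1 h).1]

lemma dTan_triangle {ι : Type*} [Fintype ι] (u v w : ι → ℝ)
    (hu : ∀ j, 0 ≤ u j) (hv : ∀ j, 0 ≤ v j) (hw : ∀ j, 0 ≤ w j) :
    dTan u w ≤ dTan u v + dTan v w := by
  by_cases huw : 0 < ∑ j, max (u j) (w j)
  swap
  · have h0 : dTan u w = 0 := by rw [dTan_eq_s4, if_neg huw]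
    rw [h0]
    exact add_nonneg (dTan_nonneg_s4 u v) (dTan_nonneg_s4 v w)
  by_cases huv : 0 < ∑ j, max (u j) (v j)
  swap
  · obtain ⟨h1, h2⟩ := (sum_max_not_pos_iff u v hu hv).1 huv
    subst h1
    rw [show dTan u u = 0 from (dTan_eq_zero_iff u u hu hu).2 rfl]
    simp
  by_cases hvw : 0 < ∑ j, max (v j) (w j)
  swap
  · obtain ⟨h1, h2⟩ := (sum_max_not_pos_iff v w hv hw).1 hvw
    rw [← h1, show dTan v v = 0 from (dTan_eq_zero_iff v v hv hv).2 rfl]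
    simp
  -- main case: all denominators positive
  set a := ∑ j, u j with ha
  set b := ∑ j, v j with hb
  set c := ∑ j, w j with hc
  set p := ∑ j, |u j - v j| with hp
  set q := ∑ j, |v j - w j| with hq
  set r := ∑ j, |u j - w j| with hr
  have ha0 : 0 ≤ a := Finset.sum_nonneg fun j _ => hu j
  have hc0 : 0 ≤ c := Finset.sum_nonneg fun j _ => hw j
  have hp0 : 0 ≤ p := Finset.sum_nonneg fun j _ => abs_nonneg _
  have hq0 : 0 ≤ q := Finset.sum_nonneg fun j _ => abs_nonneg _
  have hr0 : 0 ≤ r := Finset.sum_nonneg fun j _ => abs_nonneg _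
  have max_eq : ∀ (x y : ℝ), max x y = (x + y + |x - y|) / 2 := fun x y => by
    rcases le_total x y with h | h
    · rw [max_eq_right h, abs_of_nonpos (by linarith)]; ring
    · rw [max_eq_left h, abs_of_nonneg (by linarith)]; ring
  have sum_max : ∀ (x y : ι → ℝ),
      ∑ j, max (x j) (y j) = ((∑ j, x j) + (∑ j, y j) + ∑ j, |x j - y j|) / 2 := by
    intro x y
    rw [← Finset.sum_add_distrib, ← Finset.sum_add_distrib, Finset.sum_div]
    exact Finset.sum_congr rfl fun j _ => max_eq _ _
  have huv' : 0 < (a + b + p) / 2 := by rw [ha, hb, hp, ← sum_max]; exact huv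
  have hvw' : 0 < (b + c + q) / 2 := by rw [hb, hc, hq, ← sum_max]; exact hvw
  have huw' : 0 < (a + c + r) / 2 := by rw [ha, hc, hr, ← sum_max]; exact huw
  have habp : (0:ℝ) < a + b + p := by linarith
  have hbcq : (0:ℝ) < b + c + q := by linarith
  have hacr : (0:ℝ) < a + c + r := by linarith
  have duv : dTan u v = p / ((a + b + p) / 2) := by
    rw [dTan_eq_s4, if_pos huv, sum_max, ← ha, ← hb, ← hp]
  have dvw : dTan v w = q / ((b + c + q) / 2) := by
    rw [dTan_eq_s4, if_pos hvw, sum_max, ← hb, ← hc, ← hq]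
  have duw : dTan u w = r / ((a + c + r) / 2) := by
    rw [dTan_eq_s4, if_pos huw, sum_max, ← ha, ← hc, ← hr]
  rw [duv, dvw, duw]
  have htri : r ≤ p + q := by
    rw [hr, hp, hq, ← Finset.sum_add_distrib]
    exact Finset.sum_le_sum fun j _ => abs_sub_le _ _ _
  have hba : b ≤ a + p := by
    rw [hb, ha, hp, ← Finset.sum_add_distrib]
    refine Finset.sum_le_sum fun j _ => ?_
    have h1 := le_abs_self (v j - u j)
    rw [abs_sub_comm] at h1
    linarith
  have hbc : b ≤ c + q := by
    rw [hb, hc, hq, ← Finset.sum_add_distrib]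
    refine Finset.sum_le_sum fun j _ => ?_
    have h1 := le_abs_self (v j - w j)
    linarith
  have hs : (0:ℝ) < a + c + p + q := by linarith
  have h1 : r / (a + c + r) ≤ (p + q) / (a + c + p + q) := by
    rw [div_le_div_iff₀ hacr hs]
    nlinarith [mul_nonneg (add_nonneg ha0 hc0) (sub_nonneg.2 htri)]
  have h2 : p / (a + c + p + q) ≤ p / (a + b + p) := by
    rw [div_le_div_iff₀ hs habp]
    nlinarith [mul_nonneg hp0 (sub_nonneg.2 hbc)]
  have h3 : q / (a + c + p + q) ≤ q / (b + c + q) := by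
    rw [div_le_div_iff₀ hs hbcq]
    nlinarith [mul_nonneg hq0 (sub_nonneg.2 hba)]
  calc r / ((a + c + r) / 2) = 2 * (r / (a + c + r)) := by
        rw [div_div_eq_mul_div]; ring
    _ ≤ 2 * ((p + q) / (a + c + p + q)) := by linarith
    _ = 2 * (p / (a + c + p + q)) + 2 * (q / (a + c + p + q)) := by
        rw [add_div]; ring
    _ ≤ 2 * (p / (a + b + p)) + 2 * (q / (b + c + q)) := by linarith
    _ = p / ((a + b + p) / 2) + q / ((b + c + q) / 2) := by
        rw [div_div_eq_mul_div, div_div_eq_mul_div]; ring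

/-- `d_peak` is a metric on `ℝⁿ` (nonnegativity, identity of indiscernibles, symmetry,
triangle inequality), and moreover `d_peak(A,B) = d_Tan(φ(A), φ(B))`. -/
theorem dpeak_is_metric {n : ℕ} (A B C : Fin n → ℝ) :
    0 ≤ dpeak A B ∧ (dpeak A B = 0 ↔ A = B) ∧ dpeak A B = dpeak B A ∧
      dpeak A C ≤ dpeak A B + dpeak B C ∧
      dpeak A B = dTan (phi A) (phi B) := by
  refine ⟨?_, ?_, ?_, ?_, dpeak_eq_dTan A B⟩
  · rw [dpeak_eq_dTan]; exact dTan_nonneg_s4 _ _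
  · rw [dpeak_eq_dTan, dTan_eq_zero_iff _ _ (phi_nonneg A) (phi_nonneg B)]
    exact ⟨phi_inj A B, fun h => by rw [h]⟩
  · rw [dpeak_eq_dTan, dpeak_eq_dTan]; exact dTan_symm _ _
  · rw [dpeak_eq_dTan, dpeak_eq_dTan, dpeak_eq_dTan]
    exact dTan_triangle _ _ _ (phi_nonneg A) (phi_nonneg B) (phi_nonneg C)
end

section
/- The min–max (Tanimoto) kernel is positive semidefinite on the nonnegative orthant: for any finite collection u₁,…,u_m ∈ ℝ₊^d and any real coefficients c₁,…,c_m, Σᵢ Σⱼ cᵢ cⱼ k_MinMax(uᵢ, uⱼ) ≥ 0. -/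
open Finset

namespace KMinMaxAux

open MeasureTheory Set Real Filter Matrix

variable {m : ℕ}

lemma qf_eq (K : Matrix (Fin m) (Fin m) ℝ) (c : Fin m → ℝ) :
    dotProduct (star c) (K.mulVec c) = ∑ i, ∑ j, c i * c j * K i j := by
  simp only [dotProduct, Matrix.mulVec, Pi.star_apply, star_trivial, Finset.mul_sum]
  exact Finset.sum_congr rfl fun i _ => Finset.sum_congr rfl fun j _ => by ring

lemma qf_nonneg {K : Matrix (Fin m) (Fin m) ℝ} (hK : K.PosSemidef) (c : Fin m → ℝ) :
    0 ≤ ∑ i, ∑ j, c i * c j * K i j := by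
  have h := hK.dotProduct_mulVec_nonneg c
  rwa [qf_eq] at h

lemma posSemidef_of_qf {K : Matrix (Fin m) (Fin m) ℝ} (hsym : ∀ i j, K i j = K j i)
    (h : ∀ c : Fin m → ℝ, 0 ≤ ∑ i, ∑ j, c i * c j * K i j) : K.PosSemidef := by
  refine Matrix.PosSemidef.of_dotProduct_mulVec_nonneg ?_ ?_
  · ext i j
    simp only [Matrix.conjTranspose_apply, star_trivial]
    exact hsym j i
  · intro x
    rw [qf_eq]
    exact h x

lemma posSemidef_hadamard {A B : Matrix (Fin m) (Fin m) ℝ}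
    (hA : A.PosSemidef) (hB : B.PosSemidef) :
    (Matrix.of fun i j => A i j * B i j).PosSemidef := by
  have hAs : ∀ i j, A i j = A j i := by
    intro i j
    have := congrFun (congrFun hA.1 i) j
    simpa [Matrix.conjTranspose_apply] using this.symm
  have hBs : ∀ i j, B i j = B j i := by
    intro i j
    have := congrFun (congrFun hB.1 i) j
    simpa [Matrix.conjTranspose_apply] using this.symm
  obtain ⟨V, rfl⟩ : ∃ V : Matrix (Fin m) (Fin m) ℝ, A = V.conjTranspose * V := by
    open scoped MatrixOrder Matrix.Norms.L2Operator in
    obtain ⟨B, rfl⟩ := CStarAlgebra.nonneg_iff_eq_star_mul_self.mp hA.nonneg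
    exact ⟨B, rfl⟩
  apply posSemidef_of_qf
  · intro i j
    simp only [Matrix.of_apply]
    rw [hAs i j, hBs i j]
  · intro c
    simp only [Matrix.of_apply]
    have hent : ∀ i j, (V.conjTranspose * V) i j = ∑ k, V k i * V k j := by
      intro i j
      simp [Matrix.mul_apply, Matrix.conjTranspose_apply]
    have hterm : ∀ i j, c i * c j * ((V.conjTranspose * V) i j * B i j)
        = ∑ k, (c i * V k i) * (c j * V k j) * B i j := by
      intro i j
      rw [hent i j, Finset.sum_mul, Finset.mul_sum]
      exact Finset.sum_congr rfl fun k _ => by ring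
    have key : ∑ i, ∑ j, c i * c j * ((V.conjTranspose * V) i j * B i j)
        = ∑ k, ∑ i, ∑ j, (c i * V k i) * (c j * V k j) * B i j := by
      calc ∑ i, ∑ j, c i * c j * ((V.conjTranspose * V) i j * B i j)
          = ∑ i, ∑ j, ∑ k, (c i * V k i) * (c j * V k j) * B i j :=
            Finset.sum_congr rfl fun i _ => Finset.sum_congr rfl fun j _ => hterm i j
        _ = ∑ i, ∑ k, ∑ j, (c i * V k i) * (c j * V k j) * B i j :=
            Finset.sum_congr rfl fun i _ => Finset.sum_comm
        _ = ∑ k, ∑ i, ∑ j, (c i * V k i) * (c j * V k j) * B i j := Finset.sum_comm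
    rw [key]
    exact Finset.sum_nonneg fun k _ => qf_nonneg hB (fun i => c i * V k i)

lemma posSemidef_integral (μ : Measure ℝ) (f : Fin m → ℝ → ℝ)
    (hint : ∀ i j, Integrable (fun t => f i t * f j t) μ) :
    Matrix.PosSemidef (Matrix.of fun i j => ∫ t, f i t * f j t ∂μ) := by
  apply posSemidef_of_qf
  · intro i j
    simp only [Matrix.of_apply]
    rw [show (fun t => f i t * f j t) = fun t => f j t * f i t from
      funext fun t => mul_comm _ _]
  · intro c
    have h3 : ∫ t, ∑ i, ∑ j, c i * c j * (f i t * f j t) ∂μ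
        = ∑ i, ∑ j, c i * c j * ∫ t, f i t * f j t ∂μ := by
      rw [integral_finset_sum _ (fun i _ =>
        integrable_finset_sum _ (fun j _ => ((hint i j).const_mul _)))]
      refine Finset.sum_congr rfl fun i _ => ?_
      rw [integral_finset_sum _ (fun j _ => ((hint i j).const_mul _))]
      exact Finset.sum_congr rfl fun j _ => integral_const_mul _ _
    simp only [Matrix.of_apply]
    rw [← h3]
    refine integral_nonneg fun t => ?_
    have h1 : (∑ i, c i * f i t) ^ 2 = ∑ i, ∑ j, c i * c j * (f i t * f j t) := by
      rw [sq, Finset.sum_mul_sum]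
      exact Finset.sum_congr rfl fun i _ => Finset.sum_congr rfl fun j _ => by ring
    rw [← h1]
    exact sq_nonneg _

lemma posSemidef_min (a : Fin m → ℝ) (ha : ∀ i, 0 ≤ a i) :
    Matrix.PosSemidef (Matrix.of fun i j => min (a i) (a j)) := by
  set f : Fin m → ℝ → ℝ := fun i => (Set.Ioc 0 (a i)).indicator (1 : ℝ → ℝ) with hf
  have hprod : ∀ i j, (fun t => f i t * f j t)
      = (Set.Ioc 0 (min (a i) (a j))).indicator (1 : ℝ → ℝ) := by
    intro i j
    funext t
    have h := congrFun (Set.inter_indicator_one (M₀ := ℝ)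
      (s := Set.Ioc (0:ℝ) (a i)) (t := Set.Ioc (0:ℝ) (a j))) t
    rw [Pi.mul_apply] at h
    simp only [hf]
    rw [← h, Set.Ioc_inter_Ioc]
    simp
  have hint : ∀ i j, Integrable (fun t => f i t * f j t) (volume : Measure ℝ) := by
    intro i j
    rw [hprod i j]
    rw [integrable_indicator_iff measurableSet_Ioc]
    exact integrableOn_const measure_Ioc_lt_top.ne
  have key : ∀ i j, min (a i) (a j) = ∫ t, f i t * f j t := by
    intro i j
    rw [hprod i j, integral_indicator_one measurableSet_Ioc,
      Real.volume_real_Ioc_of_le (le_min (ha i) (ha j))]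
    simp
  have : (Matrix.of fun i j => min (a i) (a j))
      = Matrix.of fun i j => ∫ t, f i t * f j t := by
    ext i j
    exact key i j
  rw [this]
  exact posSemidef_integral volume f hint

lemma integral_exp_neg_mul {b : ℝ} (hb : 0 < b) :
    ∫ t in Set.Ioi (0:ℝ), Real.exp (-b * t) = b⁻¹ := by
  have H := integral_Ioi_of_hasDerivAt_of_tendsto'
      (f := fun t => -(Real.exp (-b * t) / b)) (f' := fun t => Real.exp (-b * t)) (a := 0)
      (m := 0) ?_ (exp_neg_integrableOn_Ioi 0 hb) ?_
  · rw [H]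
    simp
  · intro x _
    have h := (((hasDerivAt_id x).const_mul (-b)).exp.div_const b).neg
    convert h using 1
    · funext t
      simp
    · field_simp
      rfl
  · have h1 : Tendsto (fun t : ℝ => Real.exp (-b * t)) atTop (nhds 0) := by
      have := Real.tendsto_exp_neg_atTop_nhds_zero.comp
        (Tendsto.const_mul_atTop hb tendsto_id)
      refine this.congr fun t => ?_
      simp [neg_mul]
    have := (h1.div_const b).neg
    simpa using this

lemma posSemidef_invadd (s : Fin m → ℝ) (hs : ∀ i, 0 < s i) :
    Matrix.PosSemidef (Matrix.of fun i j => (s i + s j)⁻¹) := by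
  set f : Fin m → ℝ → ℝ := fun i t => Real.exp (-s i * t) with hf
  have hprod : ∀ i j, (fun t => f i t * f j t)
      = fun t => Real.exp (-(s i + s j) * t) := by
    intro i j
    funext t
    rw [hf, ← Real.exp_add]
    ring_nf
  have hint : ∀ i j, Integrable (fun t => f i t * f j t)
      ((volume : Measure ℝ).restrict (Set.Ioi 0)) := by
    intro i j
    rw [hprod i j]
    exact exp_neg_integrableOn_Ioi 0 (add_pos (hs i) (hs j))
  have key : ∀ i j, (s i + s j)⁻¹
      = ∫ t, f i t * f j t ∂((volume : Measure ℝ).restrict (Set.Ioi 0)) := by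
    intro i j
    rw [hprod i j]
    exact (integral_exp_neg_mul (add_pos (hs i) (hs j))).symm
  have : (Matrix.of fun i j => (s i + s j)⁻¹)
      = Matrix.of fun i j => ∫ t, f i t * f j t
          ∂((volume : Measure ℝ).restrict (Set.Ioi 0)) := by
    ext i j
    exact key i j
  rw [this]
  exact posSemidef_integral _ f hint

/-- Main nondegenerate case: all vectors have positive coordinate sum. -/
lemma main {D : ℕ} (v : Fin m → Fin D → ℝ) (hv : ∀ i k, 0 ≤ v i k)
    (hs : ∀ i, 0 < ∑ k, v i k) (c : Fin m → ℝ) :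
    0 ≤ ∑ i, ∑ j, c i * c j *
      ((∑ k, min (v i k) (v j k)) / (∑ k, max (v i k) (v j k))) := by
  set s : Fin m → ℝ := fun i => ∑ k, v i k with hsdef
  set M : Fin m → Fin m → ℝ := fun i j => ∑ k, min (v i k) (v j k) with hMdef
  have hMnn : ∀ i j, 0 ≤ M i j := fun i j =>
    Finset.sum_nonneg fun k _ => le_min (hv i k) (hv j k)
  have hMlei : ∀ i j, M i j ≤ s i := fun i j =>
    Finset.sum_le_sum fun k _ => min_le_left _ _
  have hMlej : ∀ i j, M i j ≤ s j := fun i j =>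
    Finset.sum_le_sum fun k _ => min_le_right _ _
  have hmax : ∀ i j, (∑ k, max (v i k) (v j k)) = s i + s j - M i j := by
    intro i j
    have h1 : ∀ k : Fin D, max (v i k) (v j k) = v i k + v j k - min (v i k) (v j k) := by
      intro k
      have := min_add_max (v i k) (v j k)
      linarith
    rw [Finset.sum_congr rfl fun k _ => h1 k]
    rw [Finset.sum_sub_distrib, Finset.sum_add_distrib]
  set r : Fin m → Fin m → ℝ := fun i j => M i j / (s i + s j) with hrdef
  have hspos : ∀ i j, 0 < s i + s j := fun i j => add_pos (hs i) (hs j)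
  have hr0 : ∀ i j, 0 ≤ r i j := fun i j => div_nonneg (hMnn i j) (hspos i j).le
  have hr1 : ∀ i j, r i j < 1 := by
    intro i j
    rw [hrdef]
    rw [div_lt_one (hspos i j)]
    have := hMlei i j
    linarith [hs j]
  have hSM : ∀ i j, 0 < s i + s j - M i j := by
    intro i j
    have := hMlei i j
    linarith [hs j]
  -- R is PSD
  have hRpsd : Matrix.PosSemidef (Matrix.of r) := by
    have h1 : Matrix.PosSemidef (Matrix.of fun i j => M i j) := by
      have heq : (Matrix.of fun i j => M i j)
          = ∑ k : Fin D, Matrix.of fun i j => min (v i k) (v j k) := by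
        ext i j
        simp [Matrix.sum_apply, hMdef]
      rw [heq]
      refine Finset.sum_induction _ _ (fun A B hA hB => hA.add hB)
        Matrix.PosSemidef.zero fun k _ => posSemidef_min (fun i => v i k) (fun i => hv i k)
    have h2 := posSemidef_invadd s hs
    have heq : Matrix.of r = Matrix.of fun i j =>
        (Matrix.of fun i j => M i j) i j * (Matrix.of fun i j => (s i + s j)⁻¹) i j := by
      ext i j
      simp [hrdef, div_eq_mul_inv]
    rw [heq]
    exact posSemidef_hadamard h1 h2
  -- powers of R are PSD
  have hpow : ∀ n : ℕ, Matrix.PosSemidef (Matrix.of fun i j => r i j ^ (n + 1)) := by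
    intro n
    induction n with
    | zero =>
        have heq : (Matrix.of fun i j => r i j ^ (0 + 1)) = Matrix.of r := by
          ext i j
          simp
        rw [heq]
        exact hRpsd
    | succ n ih =>
        have heq : (Matrix.of fun i j => r i j ^ (n + 1 + 1))
            = Matrix.of fun i j => (Matrix.of fun i j => r i j ^ (n + 1)) i j
                * (Matrix.of r) i j := by
          ext i j
          simp [pow_succ]
        rw [heq]
        exact posSemidef_hadamard ih hRpsd
  have hsummable : ∀ i j, Summable (fun n : ℕ => r i j ^ (n + 1)) := by
    intro i j
    have hgeo := summable_geometric_of_lt_one (hr0 i j) (hr1 i j)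
    have := hgeo.mul_left (r i j)
    refine this.congr fun n => ?_
    rw [← pow_succ']
  have hval : ∀ i j, (∑' n : ℕ, r i j ^ (n + 1)) = M i j / (s i + s j - M i j) := by
    intro i j
    have h1 : (fun n : ℕ => r i j ^ (n + 1)) = fun n => r i j * r i j ^ n :=
      funext fun n => by rw [← pow_succ']
    rw [h1, tsum_mul_left, tsum_geometric_of_lt_one (hr0 i j) (hr1 i j), hrdef]
    have hne : s i + s j ≠ 0 := (hspos i j).ne'
    have hne2 : s i + s j - M i j ≠ 0 := (hSM i j).ne'
    field_simp
  calc (0:ℝ) ≤ ∑' n : ℕ, ∑ i, ∑ j, c i * c j * r i j ^ (n + 1) := by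
        refine tsum_nonneg fun n => ?_
        exact qf_nonneg (hpow n) c
    _ = ∑ i, ∑ j, c i * c j * ∑' n : ℕ, r i j ^ (n + 1) := by
        rw [Summable.tsum_finsetSum fun i _ => summable_sum fun j _ => ((hsummable i j).mul_left _)]
        refine Finset.sum_congr rfl fun i _ => ?_
        rw [Summable.tsum_finsetSum fun j _ => ((hsummable i j).mul_left _)]
        exact Finset.sum_congr rfl fun j _ => tsum_mul_left
    _ = ∑ i, ∑ j, c i * c j *
          ((∑ k, min (v i k) (v j k)) / (∑ k, max (v i k) (v j k))) := by
        refine Finset.sum_congr rfl fun i _ => Finset.sum_congr rfl fun j _ => ?_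
        rw [hval i j, hmax i j]

end KMinMaxAux


/-- Min–max (Tanimoto) kernel on nonnegative vectors:
`k_MinMax(u,v) = (Σⱼ min uⱼ vⱼ) / (Σⱼ max uⱼ vⱼ)` when the denominator is positive,
and `1` otherwise (for nonnegative vectors this is exactly the case `u = v = 0`). -/
noncomputable def kMinMax {ι : Type*} [Fintype ι] (u v : ι → ℝ) : ℝ :=
  if 0 < ∑ j, max (u j) (v j) then (∑ j, min (u j) (v j)) / (∑ j, max (u j) (v j)) else 1

/-- The min–max (Tanimoto) kernel is positive semidefinite on the nonnegative orthant:
for any `u₁,…,u_m ∈ ℝ₊^d` and real coefficients `c₁,…,c_m`,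
`Σᵢ Σⱼ cᵢ cⱼ k_MinMax(uᵢ,uⱼ) ≥ 0`. -/
theorem kMinMax_psd {d m : ℕ} (u : Fin m → Fin d → ℝ)
    (hu : ∀ i j, 0 ≤ u i j) (c : Fin m → ℝ) :
    0 ≤ ∑ i : Fin m, ∑ j : Fin m, c i * c j * kMinMax (u i) (u j) := by
  classical
  open Filter Set in
  set M : Fin m → Fin m → ℝ := fun i j => ∑ k, min (u i k) (u j k) with hMdef
  set D : Fin m → Fin m → ℝ := fun i j => ∑ k, max (u i k) (u j k) with hDdef
  have hMnn : ∀ i j, 0 ≤ M i j := fun i j =>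
    Finset.sum_nonneg fun k _ => le_min (hu i k) (hu j k)
  have hMD : ∀ i j, M i j ≤ D i j := fun i j =>
    Finset.sum_le_sum fun k _ => min_le_max
  have hDnn : ∀ i j, 0 ≤ D i j := fun i j => (hMnn i j).trans (hMD i j)
  have hk : ∀ i j, kMinMax (u i) (u j) = if 0 < D i j then M i j / D i j else 1 :=
    fun i j => rfl
  -- Step 1: positivity of the regularized quadratic form
  have hstep : ∀ ε : ℝ, 0 < ε →
      0 ≤ ∑ i, ∑ j, c i * c j * ((ε + M i j) / (ε + D i j)) := by
    intro ε hε
    have hv : ∀ (i : Fin m) (k : Fin (d + 1)), 0 ≤ (Fin.cons ε (u i) : Fin (d+1) → ℝ) k := by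
      intro i k
      refine Fin.cases ?_ ?_ k
      · simpa using hε.le
      · intro k'
        simpa using hu i k'
    have hs : ∀ i, 0 < ∑ k, (Fin.cons ε (u i) : Fin (d+1) → ℝ) k := by
      intro i
      rw [Fin.sum_univ_succ]
      simp only [Fin.cons_zero, Fin.cons_succ]
      have : 0 ≤ ∑ k : Fin d, u i k := Finset.sum_nonneg fun k _ => hu i k
      linarith
    have h := KMinMaxAux.main (fun i => (Fin.cons ε (u i) : Fin (d+1) → ℝ)) hv hs c
    have hmin : ∀ i j, (∑ k : Fin (d+1), min ((Fin.cons ε (u i) : Fin (d+1) → ℝ) k) ((Fin.cons ε (u j) : Fin (d+1) → ℝ) k))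
        = ε + M i j := by
      intro i j
      rw [Fin.sum_univ_succ]
      simp [hMdef]
    have hmaxs : ∀ i j, (∑ k : Fin (d+1), max ((Fin.cons ε (u i) : Fin (d+1) → ℝ) k) ((Fin.cons ε (u j) : Fin (d+1) → ℝ) k))
        = ε + D i j := by
      intro i j
      rw [Fin.sum_univ_succ]
      simp [hDdef]
    calc (0:ℝ) ≤ ∑ i, ∑ j, c i * c j *
          ((∑ k : Fin (d+1), min ((Fin.cons ε (u i) : Fin (d+1) → ℝ) k) ((Fin.cons ε (u j) : Fin (d+1) → ℝ) k)) /
           (∑ k : Fin (d+1), max ((Fin.cons ε (u i) : Fin (d+1) → ℝ) k) ((Fin.cons ε (u j) : Fin (d+1) → ℝ) k))) := h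
      _ = ∑ i, ∑ j, c i * c j * ((ε + M i j) / (ε + D i j)) := by
          refine Finset.sum_congr rfl fun i _ => Finset.sum_congr rfl fun j _ => ?_
          rw [hmin i j, hmaxs i j]
  -- Step 2: take the limit ε → 0⁺
  have hten : ∀ i j, Tendsto (fun ε : ℝ => (ε + M i j) / (ε + D i j))
      (nhdsWithin 0 (Set.Ioi 0)) (nhds (kMinMax (u i) (u j))) := by
    intro i j
    rcases (hDnn i j).lt_or_eq with hD | hD
    · rw [hk i j, if_pos hD]
      have h1 : Tendsto (fun ε : ℝ => ε + M i j) (nhdsWithin 0 (Set.Ioi 0))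
          (nhds (0 + M i j)) :=
        ((continuous_id.add continuous_const).tendsto 0).mono_left nhdsWithin_le_nhds
      have h2 : Tendsto (fun ε : ℝ => ε + D i j) (nhdsWithin 0 (Set.Ioi 0))
          (nhds (0 + D i j)) :=
        ((continuous_id.add continuous_const).tendsto 0).mono_left nhdsWithin_le_nhds
      have := h1.div h2 (by rw [zero_add]; exact hD.ne')
      simpa [Pi.div_def] using this
    · have hM0 : M i j = 0 := le_antisymm (by rw [hD]; exact hMD i j) (hMnn i j)
      rw [hk i j, if_neg (by rw [← hD]; exact lt_irrefl 0)]
      refine Tendsto.congr' ?_ tendsto_const_nhds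
      refine Filter.eventuallyEq_of_mem self_mem_nhdsWithin fun ε hε => ?_
      have hε' : (0:ℝ) < ε := hε
      rw [hM0, ← hD, add_zero, div_self hε'.ne']
  have htend : Tendsto (fun ε : ℝ => ∑ i, ∑ j, c i * c j * ((ε + M i j) / (ε + D i j)))
      (nhdsWithin 0 (Set.Ioi 0))
      (nhds (∑ i, ∑ j, c i * c j * kMinMax (u i) (u j))) := by
    refine tendsto_finset_sum _ fun i _ => tendsto_finset_sum _ fun j _ => ?_
    exact (hten i j).const_mul _
  exact ge_of_tendsto htend
    (Filter.eventually_of_mem self_mem_nhdsWithin fun ε hε => hstep ε hε)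
end

section
/- The peak-to-peak kernel K_peak(A,B) = J_peak(A,B) is positive semidefinite on ℝⁿ: for any finite collection A₁,…,A_m ∈ ℝⁿ and any real coefficients c₁,…,c_m, Σᵢ Σⱼ cᵢ cⱼ J_peak(Aᵢ, Aⱼ) ≥ 0. -/
open Finset

section JpeakProof
open Real MeasureTheory Filter Set

-- min kernel PSD
lemma min_psd_aux {ι : Type*} [DecidableEq ι] (d : ι → ℝ) :
    ∀ (s : Finset ι) (a : ι → ℝ), (∀ i ∈ s, 0 ≤ a i) →
    0 ≤ ∑ i ∈ s, ∑ j ∈ s, d i * d j * min (a i) (a j) := by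
  intro s
  induction s using Finset.strongInductionOn with
  | _ s ih =>
    intro a ha
    rcases s.eq_empty_or_nonempty with rfl | hne
    · simp
    obtain ⟨i₀, hi₀, hmin⟩ := s.exists_min_image a hne
    have hμ : 0 ≤ a i₀ := ha i₀ hi₀
    have key : ∑ i ∈ s, ∑ j ∈ s, d i * d j * min (a i) (a j)
        = a i₀ * (∑ i ∈ s, d i)^2
          + ∑ i ∈ s, ∑ j ∈ s, d i * d j * min (a i - a i₀) (a j - a i₀) := by
      have : ∀ i ∈ s, ∀ j ∈ s, d i * d j * min (a i) (a j)
          = d i * d j * a i₀ + d i * d j * min (a i - a i₀) (a j - a i₀) := by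
        intro i hi j hj
        rw [min_sub_sub_right]
        ring
      rw [Finset.sum_congr rfl (fun i hi => Finset.sum_congr rfl (fun j hj => this i hi j hj))]
      rw [Finset.sum_congr rfl (fun i hi => Finset.sum_add_distrib)]
      rw [Finset.sum_add_distrib]
      congr 1
      rw [sq, Finset.sum_mul_sum, Finset.mul_sum]
      exact Finset.sum_congr rfl fun i _ => by
        rw [Finset.mul_sum]
        exact Finset.sum_congr rfl fun j _ => by ring
    rw [key]
    have h2 : ∑ i ∈ s, ∑ j ∈ s, d i * d j * min (a i - a i₀) (a j - a i₀)
        = ∑ i ∈ s.erase i₀, ∑ j ∈ s.erase i₀, d i * d j * min (a i - a i₀) (a j - a i₀) := by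
      rw [← Finset.add_sum_erase _ _ hi₀]
      have hz : ∑ j ∈ s, d i₀ * d j * min (a i₀ - a i₀) (a j - a i₀) = 0 := by
        refine Finset.sum_eq_zero fun j hj => ?_
        rw [sub_self, min_eq_left (by linarith [hmin j hj])]
        ring
      rw [hz, zero_add]
      refine Finset.sum_congr rfl fun i hi => ?_
      rw [← Finset.add_sum_erase _ _ hi₀]
      have : d i * d i₀ * min (a i - a i₀) (a i₀ - a i₀) = 0 := by
        rw [sub_self, min_eq_right (by linarith [hmin i (Finset.mem_of_mem_erase hi)])]
        ring
      rw [this, zero_add]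
    rw [h2]
    have := ih (s.erase i₀) (Finset.erase_ssubset hi₀) (fun i => a i - a i₀)
      (fun i hi => by
        show 0 ≤ a i - a i₀
        linarith [hmin i (Finset.mem_of_mem_erase hi)])
    have hsq : 0 ≤ (∑ i ∈ s, d i)^2 := sq_nonneg _
    nlinarith [this, hsq, hμ]

lemma aux_pt (a b : ℝ) : (if 0 < a * b then min |a| |b| else 0)
    = min (max a 0) (max b 0) + min (max (-a) 0) (max (-b) 0) := by
  rcases lt_trichotomy a 0 with ha | rfl | ha
  · rcases lt_trichotomy b 0 with hb | rfl | hb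
    · rw [if_pos (mul_pos_of_neg_of_neg ha hb), abs_of_neg ha, abs_of_neg hb,
        max_eq_right ha.le, max_eq_right hb.le, max_eq_left (by linarith : (0:ℝ) ≤ -a),
        max_eq_left (by linarith : (0:ℝ) ≤ -b), min_self, zero_add]
    · simp [max_eq_right ha.le, min_eq_right (by linarith : (0:ℝ) ≤ -a)]
    · rw [if_neg (by nlinarith), max_eq_right ha.le, max_eq_left hb.le,
        max_eq_left (by linarith : (0:ℝ) ≤ -a), max_eq_right (by linarith : -b ≤ (0:ℝ)),
        min_eq_left hb.le, min_eq_right (by linarith : (0:ℝ) ≤ -a), add_zero]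
  · simp [min_eq_left (le_max_right b 0), min_eq_left (le_max_right (-b) 0)]
  · rcases lt_trichotomy b 0 with hb | rfl | hb
    · rw [if_neg (by nlinarith), max_eq_left ha.le, max_eq_right hb.le,
        max_eq_right (by linarith : -a ≤ (0:ℝ)), max_eq_left (by linarith : (0:ℝ) ≤ -b),
        min_eq_right ha.le, min_eq_left (by linarith : (0:ℝ) ≤ -b), add_zero]
    · simp [max_eq_left ha.le, min_eq_right ha.le, min_eq_right (by linarith : -a ≤ (0:ℝ))]
    · rw [if_pos (mul_pos ha hb), abs_of_pos ha, abs_of_pos hb, max_eq_left ha.le,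
        max_eq_left hb.le, max_eq_right (by linarith : -a ≤ (0:ℝ)),
        max_eq_right (by linarith : -b ≤ (0:ℝ)), min_self, add_zero]

lemma Npeak_eq {n : ℕ} (A B : Fin n → ℝ) : Npeak A B
    = ∑ i, (min (max (A i) 0) (max (B i) 0) + min (max (-(A i)) 0) (max (-(B i)) 0)) := by
  rw [Npeak, Finset.sum_filter]
  exact Finset.sum_congr rfl fun i _ => aux_pt (A i) (B i)

lemma Npeak_comm {n : ℕ} (A B : Fin n → ℝ) : Npeak A B = Npeak B A := by
  rw [Npeak_eq, Npeak_eq]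
  exact Finset.sum_congr rfl fun i _ => by rw [min_comm, min_comm (max (-(B i)) 0)]

lemma Npeak_nonneg {n : ℕ} (A B : Fin n → ℝ) : 0 ≤ Npeak A B := by
  rw [Npeak_eq]
  refine Finset.sum_nonneg fun i _ => add_nonneg ?_ ?_ <;>
    exact le_min (le_max_right _ _) (le_max_right _ _)

lemma Npeak_le_right {n : ℕ} (A B : Fin n → ℝ) : Npeak A B ≤ ∑ k, |B k| := by
  rw [Npeak_eq]
  refine Finset.sum_le_sum fun i _ => ?_
  have : |B i| = max (B i) 0 + max (-(B i)) 0 := by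
    rcases le_total (B i) 0 with h | h
    · rw [abs_of_nonpos h, max_eq_right h, max_eq_left (by linarith), zero_add]
    · rw [abs_of_nonneg h, max_eq_left h, max_eq_right (by linarith), add_zero]
  rw [this]
  exact add_le_add (min_le_right _ _) (min_le_right _ _)

lemma Upeak_eq {n : ℕ} (A B : Fin n → ℝ) :
    Upeak A B = (∑ k, |A k|) + (∑ k, |B k|) - Npeak A B := by
  rw [Upeak, Npeak_eq, ← Finset.sum_add_distrib, ← Finset.sum_sub_distrib]
  refine Finset.sum_congr rfl fun i _ => ?_
  have habs : ∀ x : ℝ, |x| = max x 0 + max (-x) 0 := by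
    intro x
    rcases le_total x 0 with h | h
    · rw [abs_of_nonpos h, max_eq_right h, max_eq_left (by linarith), zero_add]
    · rw [abs_of_nonneg h, max_eq_left h, max_eq_right (by linarith), add_zero]
  have h1 := max_add_min (max (A i) 0) (max (B i) 0)
  have h2 := max_add_min (max (-(A i)) 0) (max (-(B i)) 0)
  rw [habs (A i), habs (B i)]
  linarith

-- Schur product: product of two PSD kernels (in quadratic-form sense) is PSD
lemma schur_psd {m : ℕ} (K P : Fin m → Fin m → ℝ)
    (hKs : ∀ i j, K i j = K j i)
    (hK : ∀ d : Fin m → ℝ, 0 ≤ ∑ i, ∑ j, d i * d j * K i j)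
    (hP : ∀ d : Fin m → ℝ, 0 ≤ ∑ i, ∑ j, d i * d j * P i j)
    (c : Fin m → ℝ) : 0 ≤ ∑ i, ∑ j, c i * c j * (K i j * P i j) := by
  set M : Matrix (Fin m) (Fin m) ℝ := Matrix.of K with hM
  have hpsd : M.PosSemidef := by
    rw [Matrix.posSemidef_iff_dotProduct_mulVec]
    constructor
    · ext i j
      simp [Matrix.conjTranspose_apply, hM, hKs j i]
    · intro x
      have := hK x
      calc (0:ℝ) ≤ ∑ i, ∑ j, x i * x j * K i j := hK x
        _ = dotProduct (star x) (M.mulVec x) := by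
          simp only [dotProduct, Matrix.mulVec, Pi.star_apply, star_trivial,
            Finset.mul_sum]
          exact Finset.sum_congr rfl fun i _ => Finset.sum_congr rfl fun j _ => by
            simp only [hM, Matrix.of_apply, dotProduct]
            ring
  open scoped MatrixOrder in
  set B := CFC.sqrt M with hB
  open scoped MatrixOrder in
  have hBB : B * B = M := CFC.sqrt_mul_sqrt_self M hpsd.nonneg
  open scoped MatrixOrder in
  have hBsym : ∀ i j, B i j = B j i := fun i j =>
    show CFC.sqrt M i j = CFC.sqrt M j i from
      ((Matrix.nonneg_iff_posSemidef.mp (CFC.sqrt_nonneg M)).1.apply i j).symm.trans (star_trivial _)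
  have hKdecomp : ∀ i j, K i j = ∑ k, B i k * B j k := by
    intro i j
    have : (B * B) i j = K i j := by rw [hBB]; rfl
    rw [← this, Matrix.mul_apply]
    exact Finset.sum_congr rfl fun k _ => by rw [hBsym k j]
  calc (0:ℝ) ≤ ∑ k, ∑ i, ∑ j, (c i * B i k) * (c j * B j k) * P i j := by
        refine Finset.sum_nonneg fun k _ => hP fun i => c i * B i k
    _ = ∑ i, ∑ j, c i * c j * (K i j * P i j) := by
        rw [Finset.sum_comm]
        refine Finset.sum_congr rfl fun i _ => ?_
        rw [Finset.sum_comm]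
        refine Finset.sum_congr rfl fun j _ => ?_
        rw [hKdecomp i j, Finset.sum_mul, Finset.mul_sum]
        exact Finset.sum_congr rfl fun k _ => by ring

lemma Npeak_psd {n m : ℕ} (A : Fin m → Fin n → ℝ) (d : Fin m → ℝ) :
    0 ≤ ∑ i, ∑ j, d i * d j * Npeak (A i) (A j) := by
  have : ∑ i, ∑ j, d i * d j * Npeak (A i) (A j)
      = ∑ k : Fin n, ((∑ i, ∑ j, d i * d j * min (max (A i k) 0) (max (A j k) 0))
        + ∑ i, ∑ j, d i * d j * min (max (-(A i k)) 0) (max (-(A j k)) 0)) := by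
    have swap : ∀ F : Fin m → Fin m → Fin n → ℝ,
        ∑ i, ∑ j, ∑ k, F i j k = ∑ k, ∑ i, ∑ j, F i j k := fun F =>
      (Finset.sum_congr rfl fun i _ => Finset.sum_comm).trans Finset.sum_comm
    simp only [Npeak_eq, Finset.mul_sum, mul_add]
    rw [swap]
    refine Finset.sum_congr rfl fun k _ => ?_
    rw [show (∑ i : Fin m, ∑ j : Fin m, (d i * d j * (max (A i k) 0 ⊓ max (A j k) 0)
        + d i * d j * (max (-(A i k)) 0 ⊓ max (-(A j k)) 0)))
      = ∑ i : Fin m, ((∑ j, d i * d j * (max (A i k) 0 ⊓ max (A j k) 0))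
        + ∑ j, d i * d j * (max (-(A i k)) 0 ⊓ max (-(A j k)) 0)) from
      Finset.sum_congr rfl fun i _ => Finset.sum_add_distrib]
    rw [Finset.sum_add_distrib]
  rw [this]
  refine Finset.sum_nonneg fun k _ => add_nonneg ?_ ?_
  · exact min_psd_aux d univ (fun i => max (A i k) 0) (fun i _ => le_max_right _ _)
  · exact min_psd_aux d univ (fun i => max (-(A i k)) 0) (fun i _ => le_max_right _ _)

lemma Npeak_pow_psd {n m : ℕ} (A : Fin m → Fin n → ℝ) (p : ℕ) (d : Fin m → ℝ) :
    0 ≤ ∑ i, ∑ j, d i * d j * (Npeak (A i) (A j)) ^ p := by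
  induction p generalizing d with
  | zero =>
    simp only [pow_zero, mul_one]
    have : ∑ i, ∑ j, d i * d j = (∑ i, d i) ^ 2 := by
      rw [sq, Finset.sum_mul_sum]
    rw [this]; positivity
  | succ p ih =>
    have := schur_psd (fun i j => Npeak (A i) (A j)) (fun i j => (Npeak (A i) (A j)) ^ p)
      (fun i j => Npeak_comm _ _) (Npeak_psd A) ih d
    calc (0:ℝ) ≤ ∑ i, ∑ j, d i * d j * (Npeak (A i) (A j) * (Npeak (A i) (A j)) ^ p) := this
      _ = ∑ i, ∑ j, d i * d j * (Npeak (A i) (A j)) ^ (p+1) := by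
        refine Finset.sum_congr rfl fun i _ => Finset.sum_congr rfl fun j _ => by ring

lemma Npeak_exp_psd {n m : ℕ} (A : Fin m → Fin n → ℝ) {t : ℝ} (ht : 0 ≤ t) (d : Fin m → ℝ) :
    0 ≤ ∑ i, ∑ j, d i * d j * (Npeak (A i) (A j) * Real.exp (t * Npeak (A i) (A j))) := by
  have hexp : ∀ x : ℝ, Real.exp x = ∑' k : ℕ, x ^ k / k.factorial := by
    intro x
    rw [Real.exp_eq_exp_ℝ, NormedSpace.exp_eq_tsum_div]
  have key : ∀ i j : Fin m, d i * d j * (Npeak (A i) (A j) * Real.exp (t * Npeak (A i) (A j)))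
      = ∑' k : ℕ, t ^ k / k.factorial * (d i * d j * (Npeak (A i) (A j)) ^ (k + 1)) := by
    intro i j
    rw [hexp, ← tsum_mul_left, ← tsum_mul_left]
    exact tsum_congr fun k => by rw [mul_pow]; ring
  calc (0:ℝ) ≤ ∑' k : ℕ, ∑ i, ∑ j, t ^ k / k.factorial
        * (d i * d j * (Npeak (A i) (A j)) ^ (k + 1)) := by
        refine tsum_nonneg fun k => ?_
        have h1 : ∀ i : Fin m, ∑ j, t ^ k / (k.factorial : ℝ)
            * (d i * d j * (Npeak (A i) (A j)) ^ (k + 1))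
            = t ^ k / k.factorial * ∑ j, d i * d j * (Npeak (A i) (A j)) ^ (k + 1) := fun i =>
          (Finset.mul_sum _ _ _).symm
        rw [Finset.sum_congr rfl fun i _ => h1 i, ← Finset.mul_sum]
        have := Npeak_pow_psd A (k + 1) d
        positivity
    _ = ∑ i, ∑ j, d i * d j * (Npeak (A i) (A j) * Real.exp (t * Npeak (A i) (A j))) := by
        have hsummable : ∀ (i j : Fin m), Summable (fun k : ℕ => t ^ k / (k.factorial : ℝ)
            * (d i * d j * (Npeak (A i) (A j)) ^ (k + 1))) := by
          intro i j
          have h := (Real.summable_pow_div_factorial (t * Npeak (A i) (A j))).mul_left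
            (d i * d j * Npeak (A i) (A j))
          refine h.congr fun k => ?_
          rw [mul_pow]
          ring
        rw [Summable.tsum_finsetSum (fun i _ => summable_sum (fun j _ => hsummable i j))]
        refine Finset.sum_congr rfl fun i _ => ?_
        rw [Summable.tsum_finsetSum (fun j _ => hsummable i j)]
        exact Finset.sum_congr rfl fun j _ => (key i j).symm

lemma integrable_exp_neg_mul {b : ℝ} (hb : 0 < b) :
    IntegrableOn (fun t : ℝ => Real.exp (-(b * t))) (Ioi (0:ℝ)) := by
  have := exp_neg_integrableOn_Ioi 0 hb
  refine this.congr_fun (fun t _ => by simp only [neg_mul]) measurableSet_Ioi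

lemma integral_exp_neg_mul {b : ℝ} (hb : 0 < b) :
    ∫ t in Ioi (0:ℝ), Real.exp (-(b * t)) = 1 / b := by
  have hderiv : ∀ x ∈ Ioi (0:ℝ), HasDerivAt (fun t : ℝ => -Real.exp (-(b * t)) / b)
      (Real.exp (-(b * x))) x := by
    intro x _
    have h1 : HasDerivAt (fun t : ℝ => -(b * t)) (-b) x := by
      exact ((hasDerivAt_id' x).const_mul b).neg.congr_deriv (by ring)
    have h2 := (h1.exp).neg.div_const b
    refine h2.congr_deriv ?_
    field_simp
  have htend : Tendsto (fun t : ℝ => -Real.exp (-(b * t)) / b) atTop (nhds 0) := by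
    have h1 : Tendsto (fun t : ℝ => -(b * t)) atTop atBot := by
      have h0 : Tendsto (fun t : ℝ => b * t) atTop atTop :=
        (tendsto_id (α := ℝ)).const_mul_atTop hb
      exact tendsto_neg_atBot_iff.mpr h0
    have h2 : Tendsto (fun t : ℝ => Real.exp (-(b * t))) atTop (nhds 0) :=
      Real.tendsto_exp_atBot.comp h1
    have := (h2.neg).div_const b
    simpa using this
  have hcont : ContinuousWithinAt (fun t : ℝ => -Real.exp (-(b * t)) / b) (Ici (0:ℝ)) 0 :=
    (Continuous.continuousWithinAt (by continuity))
  rw [integral_Ioi_of_hasDerivAt_of_tendsto hcont hderiv (integrable_exp_neg_mul hb) htend]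
  rw [zero_sub]
  field_simp
  simp

lemma ratio_psd {n m : ℕ} (A : Fin m → Fin n → ℝ) (d : Fin m → ℝ)
    (hd : ∀ i, d i ≠ 0 → 0 < ∑ k, |A i k|) :
    0 ≤ ∑ i, ∑ j, d i * d j * (Npeak (A i) (A j) / Upeak (A i) (A j)) := by
  set S : Fin m → ℝ := fun i => ∑ k, |A i k| with hS
  have hSnn : ∀ i, 0 ≤ S i := fun i => Finset.sum_nonneg fun k _ => abs_nonneg _
  have hUpos : ∀ i j, d i ≠ 0 → 0 < Upeak (A i) (A j) := by
    intro i j hdi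
    have h1 := Npeak_le_right (A i) (A j)
    have h2 := hd i hdi
    rw [Upeak_eq]
    have := hSnn j
    simp only [hS] at *
    linarith
  have hint : ∀ i j : Fin m, Integrable
      (fun t : ℝ => d i * d j * Npeak (A i) (A j) * Real.exp (-(Upeak (A i) (A j) * t)))
      (volume.restrict (Ioi (0:ℝ))) := by
    intro i j
    by_cases hdi : d i = 0
    · have : (fun t : ℝ => d i * d j * Npeak (A i) (A j)
          * Real.exp (-(Upeak (A i) (A j) * t))) = fun _ => 0 := by
        funext t; rw [hdi]; ring
      rw [this]; exact integrable_zero _ _ _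
    · exact (integrable_exp_neg_mul (hUpos i j hdi)).const_mul _
  have key : ∀ i j : Fin m, d i * d j * (Npeak (A i) (A j) / Upeak (A i) (A j))
      = ∫ t in Ioi (0:ℝ), d i * d j * Npeak (A i) (A j)
          * Real.exp (-(Upeak (A i) (A j) * t)) := by
    intro i j
    by_cases hdi : d i = 0
    · simp [hdi]
    · rw [MeasureTheory.integral_const_mul, integral_exp_neg_mul (hUpos i j hdi)]
      field_simp
  calc ∑ i, ∑ j, d i * d j * (Npeak (A i) (A j) / Upeak (A i) (A j))
      = ∫ t in Ioi (0:ℝ), ∑ i, ∑ j, d i * d j * Npeak (A i) (A j)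
          * Real.exp (-(Upeak (A i) (A j) * t)) := by
        rw [MeasureTheory.integral_finset_sum univ
          (fun i _ => integrable_finset_sum univ (fun j _ => hint i j))]
        refine Finset.sum_congr rfl fun i _ => ?_
        rw [MeasureTheory.integral_finset_sum univ (fun j _ => hint i j)]
        exact Finset.sum_congr rfl fun j _ => key i j
    _ ≥ 0 := by
        refine MeasureTheory.setIntegral_nonneg measurableSet_Ioi fun t ht => ?_
        have ht' : (0:ℝ) ≤ t := le_of_lt ht
        have hpt : ∀ i j : Fin m, d i * d j * Npeak (A i) (A j)
            * Real.exp (-(Upeak (A i) (A j) * t))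
            = (d i * Real.exp (-(S i * t))) * (d j * Real.exp (-(S j * t)))
              * (Npeak (A i) (A j) * Real.exp (t * Npeak (A i) (A j))) := by
          intro i j
          have harg : -(Upeak (A i) (A j) * t)
              = -(S i * t) + (-(S j * t) + t * Npeak (A i) (A j)) := by
            rw [Upeak_eq]; simp only [hS]; ring
          rw [harg, Real.exp_add, Real.exp_add]
          ring
        rw [Finset.sum_congr rfl fun i _ => Finset.sum_congr rfl fun j _ => hpt i j]
        exact Npeak_exp_psd A ht' (fun i => d i * Real.exp (-(S i * t)))

/-- The peak-to-peak kernel `K_peak = J_peak` is positive semidefinite on `ℝⁿ`: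
for any finite collection `A₁,…,A_m ∈ ℝⁿ` and real coefficients `c₁,…,c_m`,
`Σᵢ Σⱼ cᵢ cⱼ J_peak(Aᵢ,Aⱼ) ≥ 0`. -/
theorem Jpeak_kernel_psd {n m : ℕ} (A : Fin m → Fin n → ℝ) (c : Fin m → ℝ) :
    0 ≤ ∑ i : Fin m, ∑ j : Fin m, c i * c j * Jpeak (A i) (A j) := by
  classical
  set S : Fin m → ℝ := fun i => ∑ k, |A i k| with hS
  have hSnn : ∀ i, 0 ≤ S i := fun i => Finset.sum_nonneg fun k _ => abs_nonneg _
  have hzero : ∀ i, S i = 0 → ∀ k, A i k = 0 := by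
    intro i hi k
    have := (Finset.sum_eq_zero_iff_of_nonneg (fun k _ => abs_nonneg (A i k))).mp hi
      k (Finset.mem_univ k)
    exact abs_eq_zero.mp this
  have hN0 : ∀ i j, S i = 0 → Npeak (A i) (A j) = 0 := by
    intro i j hi
    rw [Npeak, Finset.sum_filter]
    refine Finset.sum_eq_zero fun k _ => ?_
    rw [hzero i hi k]
    simp
  have hU0 : ∀ i j, S i = 0 → S j = 0 → Upeak (A i) (A j) = 0 := by
    intro i j hi hj
    rw [Upeak_eq, hN0 i j hi]
    simp only [hS] at hi hj ⊢
    rw [hi, hj]; ring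
  have hUpos : ∀ i j, S i ≠ 0 → 0 < Upeak (A i) (A j) := by
    intro i j hi
    have h1 := Npeak_le_right (A i) (A j)
    have h2 : 0 < S i := lt_of_le_of_ne (hSnn i) (Ne.symm hi)
    rw [Upeak_eq]
    have := hSnn j
    simp only [hS] at *
    linarith
  have hUpos' : ∀ i j, S j ≠ 0 → 0 < Upeak (A i) (A j) := by
    intro i j hj
    have h1 := Npeak_le_right (A j) (A i)
    have h2 : 0 < S j := lt_of_le_of_ne (hSnn j) (Ne.symm hj)
    rw [Upeak_eq]
    have := hSnn i
    rw [Npeak_comm]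
    simp only [hS] at *
    linarith
  set z : Fin m → ℝ := fun i => if S i = 0 then c i else 0 with hz
  set e : Fin m → ℝ := fun i => if S i = 0 then 0 else c i with he
  have split : ∀ i j, c i * c j * Jpeak (A i) (A j)
      = z i * z j + e i * e j * (Npeak (A i) (A j) / Upeak (A i) (A j)) := by
    intro i j
    by_cases hi : S i = 0 <;> by_cases hj : S j = 0 <;>
      simp only [hz, he, hi, hj, if_pos, if_neg, ite_true, ite_false]
    · have hu := hU0 i j hi hj
      rw [Jpeak, if_neg (by rw [hu]; exact lt_irrefl 0)]
      ring
    · rw [Jpeak, if_pos (hUpos' i j hj), hN0 i j hi, zero_div]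
      ring
    · rw [Jpeak, if_pos (hUpos i j hi), Npeak_comm, hN0 j i hj, zero_div]
      ring
    · rw [Jpeak, if_pos (hUpos i j hi)]
      ring
  calc ∑ i : Fin m, ∑ j : Fin m, c i * c j * Jpeak (A i) (A j)
      = ∑ i : Fin m, ∑ j : Fin m, (z i * z j
          + e i * e j * (Npeak (A i) (A j) / Upeak (A i) (A j))) :=
        Finset.sum_congr rfl fun i _ => Finset.sum_congr rfl fun j _ => split i j
    _ = (∑ i, z i) ^ 2 + ∑ i, ∑ j, e i * e j * (Npeak (A i) (A j) / Upeak (A i) (A j)) := by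
        rw [Finset.sum_congr rfl fun i (_ : i ∈ Finset.univ) => Finset.sum_add_distrib,
          Finset.sum_add_distrib, sq, Finset.sum_mul_sum]
    _ ≥ 0 := by
        have h1 : (0:ℝ) ≤ (∑ i, z i) ^ 2 := sq_nonneg _
        have h2 := ratio_psd A e fun i hi => by
          simp only [he] at hi
          by_cases h : S i = 0
          · simp [h] at hi
          · exact lt_of_le_of_ne (hSnn i) (Ne.symm h)
        linarith

end JpeakProof
end

section
/- Let B₀,…,B_{K−1} be a partition of ℝ into pairwise disjoint sets whose union is ℝ. The multistate Tanimoto kernel K_multi(X,Y) = J_Tan(ψ^(K)(X), ψ^(K)(Y)) is positive semidefinite on ℝⁿ: for any finite collection X₁,…,X_m ∈ ℝⁿ and any real coefficients c₁,…,c_m, Σᵢ Σⱼ cᵢ cⱼ K_multi(Xᵢ, Xⱼ) ≥ 0. -/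
open Finset

/-- Multistate embedding `ψ^(K) : ℝⁿ → ℝ₊^{n×K}`:
`[ψ^(K)(X)]_{i,k} = |xᵢ| · 1{xᵢ ∈ B_k}`. -/
noncomputable def psi {n K : ℕ} (B : Fin K → Set ℝ) (X : Fin n → ℝ) :
    Fin n × Fin K → ℝ :=
  fun p => Set.indicator (B p.2) (fun _ => |X p.1|) (X p.1)

/-- Multistate Tanimoto kernel `K_multi(X,Y) = J_Tan(ψ^(K)(X), ψ^(K)(Y))`. -/
noncomputable def Kmulti {n K : ℕ} (B : Fin K → Set ℝ) (X Y : Fin n → ℝ) : ℝ :=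
  JTan (psi B X) (psi B Y)

section TanimotoAux
open MeasureTheory Set Real

noncomputable def mfeat (a : ℝ) : ℝ → ℝ := (Set.Ioo (0:ℝ) a).indicator (fun _ => 1)

lemma mfeat_mul (a b t : ℝ) : mfeat a t * mfeat b t = mfeat (min a b) t := by
  simp only [mfeat, Set.indicator_apply, Set.mem_Ioo, lt_min_iff]
  by_cases h0 : 0 < t
  · by_cases ha : t < a <;> by_cases hb : t < b <;> simp [h0, ha, hb]
  · simp [h0]

lemma mfeat_mul_fun (a b : ℝ) : (fun t => mfeat a t * mfeat b t) = mfeat (min a b) :=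
  funext fun t => mfeat_mul a b t

lemma mfeat_integrable (a : ℝ) : Integrable (mfeat a) := by
  unfold mfeat
  rw [integrable_indicator_iff measurableSet_Ioo]
  exact integrableOn_const measure_Ioo_lt_top.ne

lemma mfeat_integral (a : ℝ) (ha : 0 ≤ a) : ∫ t, mfeat a t = a := by
  unfold mfeat
  rw [MeasureTheory.integral_indicator_const (1:ℝ) measurableSet_Ioo]
  simp [Real.volume_Ioo, ENNReal.toReal_ofReal, ha]

noncomputable def cfeat (a : ℝ) : ℝ → ℝ := (Set.Ioi (0:ℝ)).indicator (fun t => Real.exp (-(a*t)))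

lemma cfeat_mul_fun (a b : ℝ) : (fun t => cfeat a t * cfeat b t) = cfeat (a+b) := by
  funext t
  simp only [cfeat, Set.indicator_apply, Set.mem_Ioi]
  by_cases h : 0 < t
  · simp only [if_pos h, ← Real.exp_add]
    congr 1; ring
  · simp [h]

lemma cfeat_integrable {a : ℝ} (ha : 0 < a) : Integrable (cfeat a) := by
  unfold cfeat
  rw [integrable_indicator_iff measurableSet_Ioi]
  simpa [neg_mul] using exp_neg_integrableOn_Ioi 0 ha

lemma cfeat_integral {a : ℝ} (ha : 0 < a) : ∫ t, cfeat a t = a⁻¹ := by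
  unfold cfeat
  rw [MeasureTheory.integral_indicator measurableSet_Ioi]
  have h := integral_comp_mul_left_Ioi (fun x => Real.exp (-x)) 0 ha
  simp only [mul_zero, integral_exp_neg_Ioi, neg_zero, Real.exp_zero, smul_eq_mul, mul_one] at h
  exact h

lemma schur_step {m : ℕ} (s : Finset (Fin m)) (A : Fin m → Fin m → ℝ)
    (hA : ∀ c : Fin m → ℝ, 0 ≤ ∑ i ∈ s, ∑ j ∈ s, c i * c j * A i j)
    (f : Fin m → ℝ → ℝ)
    (hf : ∀ i ∈ s, ∀ j ∈ s, Integrable (fun t => f i t * f j t))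
    (c : Fin m → ℝ) :
    0 ≤ ∑ i ∈ s, ∑ j ∈ s, c i * c j * (A i j * ∫ t, f i t * f j t) := by
  have hint : ∀ i ∈ s, ∀ j ∈ s,
      Integrable (fun t => (c i * f i t) * (c j * f j t) * A i j) := by
    intro i hi j hj
    have he : (fun t => (c i * f i t) * (c j * f j t) * A i j)
        = fun t => (c i * c j * A i j) * (f i t * f j t) := by funext t; ring
    rw [he]
    exact (hf i hi j hj).const_mul _
  have key : ∑ i ∈ s, ∑ j ∈ s, c i * c j * (A i j * ∫ t, f i t * f j t)
      = ∫ t, ∑ i ∈ s, ∑ j ∈ s, (c i * f i t) * (c j * f j t) * A i j := by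
    rw [integral_finset_sum s (fun i hi => integrable_finset_sum s (fun j hj => hint i hi j hj))]
    refine Finset.sum_congr rfl fun i hi => ?_
    rw [integral_finset_sum s (fun j hj => hint i hi j hj)]
    refine Finset.sum_congr rfl fun j hj => ?_
    have he : (fun t => (c i * f i t) * (c j * f j t) * A i j)
        = fun t => (c i * c j * A i j) * (f i t * f j t) := by funext t; ring
    rw [he, MeasureTheory.integral_const_mul _ _]
    ring
  rw [key]
  exact integral_nonneg fun t => hA (fun i => c i * f i t)

lemma pow_psd {m : ℕ} {ι : Type*} [Fintype ι] (u : Fin m → ι → ℝ)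
    (hu : ∀ i q, 0 ≤ u i q) (s : Finset (Fin m))
    (hN : ∀ i ∈ s, 0 < ∑ q, u i q) :
    ∀ (p : ℕ) (c : Fin m → ℝ), 0 ≤ ∑ i ∈ s, ∑ j ∈ s,
      c i * c j * ((∑ q, min (u i q) (u j q)) / ((∑ q, u i q) + ∑ q, u j q)) ^ p := by
  intro p
  induction p with
  | zero =>
    intro c
    simp only [pow_zero, mul_one]
    rw [← Finset.sum_mul_sum]
    exact mul_self_nonneg _
  | succ p ih =>
    intro c
    have hA1 : ∀ c : Fin m → ℝ, 0 ≤ ∑ i ∈ s, ∑ j ∈ s, c i * c j *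
        (((∑ q, min (u i q) (u j q)) / ((∑ q, u i q) + ∑ q, u j q)) ^ p
          * ((∑ q, u i q) + ∑ q, u j q)⁻¹) := by
      intro c
      have hf : ∀ i ∈ s, ∀ j ∈ s, Integrable
          (fun t => cfeat (∑ q, u i q) t * cfeat (∑ q, u j q) t) := by
        intro i hi j hj
        rw [cfeat_mul_fun]
        exact cfeat_integrable (add_pos (hN i hi) (hN j hj))
      have h := schur_step s _ ih (fun i => cfeat (∑ q, u i q)) hf c
      refine le_trans h (le_of_eq ?_)
      refine Finset.sum_congr rfl fun i hi => Finset.sum_congr rfl fun j hj => ?_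
      rw [cfeat_mul_fun, cfeat_integral (add_pos (hN i hi) (hN j hj))]
    have hq : ∀ q0 : ι, 0 ≤ ∑ i ∈ s, ∑ j ∈ s, c i * c j *
        ((((∑ q, min (u i q) (u j q)) / ((∑ q, u i q) + ∑ q, u j q)) ^ p
          * ((∑ q, u i q) + ∑ q, u j q)⁻¹) * min (u i q0) (u j q0)) := by
      intro q0
      have hf : ∀ i ∈ s, ∀ j ∈ s, Integrable
          (fun t => mfeat (u i q0) t * mfeat (u j q0) t) := by
        intro i hi j hj
        rw [mfeat_mul_fun]
        exact mfeat_integrable _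
      have h := schur_step s _ hA1 (fun i => mfeat (u i q0)) hf c
      refine le_trans h (le_of_eq ?_)
      refine Finset.sum_congr rfl fun i hi => Finset.sum_congr rfl fun j hj => ?_
      rw [mfeat_mul_fun, mfeat_integral _ (le_min (hu i q0) (hu j q0))]
    have htot : 0 ≤ ∑ q0 : ι, ∑ i ∈ s, ∑ j ∈ s, c i * c j *
        ((((∑ q, min (u i q) (u j q)) / ((∑ q, u i q) + ∑ q, u j q)) ^ p
          * ((∑ q, u i q) + ∑ q, u j q)⁻¹) * min (u i q0) (u j q0)) :=
      Finset.sum_nonneg fun q0 _ => hq q0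
    refine le_trans htot (le_of_eq ?_)
    rw [Finset.sum_comm]
    refine Finset.sum_congr rfl fun i _ => ?_
    rw [Finset.sum_comm]
    refine Finset.sum_congr rfl fun j _ => ?_
    have hfac : ∑ q0 : ι, c i * c j *
        ((((∑ q, min (u i q) (u j q)) / ((∑ q, u i q) + ∑ q, u j q)) ^ p
          * ((∑ q, u i q) + ∑ q, u j q)⁻¹) * min (u i q0) (u j q0))
        = (c i * c j * ((((∑ q, min (u i q) (u j q)) / ((∑ q, u i q) + ∑ q, u j q)) ^ p
          * ((∑ q, u i q) + ∑ q, u j q)⁻¹))) * ∑ q0 : ι, min (u i q0) (u j q0) := by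
      rw [Finset.mul_sum]
      exact Finset.sum_congr rfl fun q0 _ => by ring
    rw [hfac, pow_succ, div_eq_mul_inv]
    ring

lemma jtan_psd {m : ℕ} {ι : Type*} [Fintype ι] (u : Fin m → ι → ℝ)
    (hu : ∀ i q, 0 ≤ u i q) (c : Fin m → ℝ) :
    0 ≤ ∑ i : Fin m, ∑ j : Fin m, c i * c j * JTan (u i) (u j) := by
  classical
  set N : Fin m → ℝ := fun i => ∑ q, u i q with hNdef
  have hN0 : ∀ i, 0 ≤ N i := fun i => Finset.sum_nonneg fun q _ => hu i q
  have hzero : ∀ i, ¬ 0 < N i → ∀ q, u i q = 0 := by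
    intro i hi q
    have h0 : N i = 0 := le_antisymm (not_lt.1 hi) (hN0 i)
    exact (Finset.sum_eq_zero_iff_of_nonneg (fun q _ => hu i q)).1 h0 q (Finset.mem_univ q)
  have hS0 : ∀ i j, 0 ≤ ∑ q, min (u i q) (u j q) :=
    fun i j => Finset.sum_nonneg fun q _ => le_min (hu i q) (hu j q)
  have hSle : ∀ i j, (∑ q, min (u i q) (u j q)) ≤ N i :=
    fun i j => Finset.sum_le_sum fun q _ => min_le_left _ _
  have hmax : ∀ i j, (∑ q, max (u i q) (u j q))
      = N i + N j - ∑ q, min (u i q) (u j q) := by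
    intro i j
    rw [eq_sub_iff_add_eq, ← Finset.sum_add_distrib]
    simp only [hNdef]
    rw [← Finset.sum_add_distrib]
    exact Finset.sum_congr rfl fun q _ => max_add_min _ _
  set W : Finset (Fin m) := Finset.univ.filter (fun i => 0 < N i) with hWdef
  set V : Finset (Fin m) := Finset.univ.filter (fun i => ¬ 0 < N i) with hVdef
  have hmemW : ∀ i ∈ W, 0 < N i := fun i hi => (Finset.mem_filter.1 hi).2
  have hmemV : ∀ i ∈ V, ¬ 0 < N i := fun i hi => (Finset.mem_filter.1 hi).2
  have expand : ∑ i : Fin m, ∑ j : Fin m, c i * c j * JTan (u i) (u j)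
      = ((∑ i ∈ W, ∑ j ∈ W, c i * c j * JTan (u i) (u j))
        + ∑ i ∈ W, ∑ j ∈ V, c i * c j * JTan (u i) (u j))
      + ((∑ i ∈ V, ∑ j ∈ W, c i * c j * JTan (u i) (u j))
        + ∑ i ∈ V, ∑ j ∈ V, c i * c j * JTan (u i) (u j)) := by
    rw [← Finset.sum_filter_add_sum_filter_not Finset.univ (fun i => 0 < N i)
      (fun i => ∑ j : Fin m, c i * c j * JTan (u i) (u j))]
    congr 1
    · rw [← Finset.sum_add_distrib]
      exact Finset.sum_congr rfl fun i _ =>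
        (Finset.sum_filter_add_sum_filter_not Finset.univ (fun j => 0 < N j)
          (fun j => c i * c j * JTan (u i) (u j))).symm
    · rw [← Finset.sum_add_distrib]
      exact Finset.sum_congr rfl fun i _ =>
        (Finset.sum_filter_add_sum_filter_not Finset.univ (fun j => 0 < N j)
          (fun j => c i * c j * JTan (u i) (u j))).symm
  have hJwv : ∀ i, 0 < N i → ∀ j, ¬ 0 < N j → JTan (u i) (u j) = 0 := by
    intro i hi j hj
    have hmx : (∑ q, max (u i q) (u j q)) = N i :=
      Finset.sum_congr rfl fun q _ => by rw [hzero j hj q]; exact max_eq_left (hu i q)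
    have hmn : (∑ q, min (u i q) (u j q)) = 0 :=
      Finset.sum_eq_zero fun q _ => by rw [hzero j hj q]; exact min_eq_right (hu i q)
    simp only [JTan, hmx, hmn]
    rw [if_pos hi]
    simp
  have hJvw : ∀ i, ¬ 0 < N i → ∀ j, 0 < N j → JTan (u i) (u j) = 0 := by
    intro i hi j hj
    have hmx : (∑ q, max (u i q) (u j q)) = N j :=
      Finset.sum_congr rfl fun q _ => by rw [hzero i hi q]; exact max_eq_right (hu j q)
    have hmn : (∑ q, min (u i q) (u j q)) = 0 :=
      Finset.sum_eq_zero fun q _ => by rw [hzero i hi q]; exact min_eq_left (hu j q)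
    simp only [JTan, hmx, hmn]
    rw [if_pos hj]
    simp
  have hJvv : ∀ i, ¬ 0 < N i → ∀ j, ¬ 0 < N j → JTan (u i) (u j) = 1 := by
    intro i hi j hj
    have hmx : (∑ q, max (u i q) (u j q)) = 0 :=
      Finset.sum_eq_zero fun q _ => by rw [hzero i hi q, hzero j hj q, max_self]
    simp only [JTan, hmx]
    norm_num
  have hVV : 0 ≤ ∑ i ∈ V, ∑ j ∈ V, c i * c j * JTan (u i) (u j) := by
    have h1 : ∑ i ∈ V, ∑ j ∈ V, c i * c j * JTan (u i) (u j)
        = (∑ i ∈ V, c i) * (∑ j ∈ V, c j) := by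
      rw [Finset.sum_mul_sum]
      exact Finset.sum_congr rfl fun i hi => Finset.sum_congr rfl fun j hj => by
        rw [hJvv i (hmemV i hi) j (hmemV j hj), mul_one]
    rw [h1]
    exact mul_self_nonneg _
  have hWV : ∑ i ∈ W, ∑ j ∈ V, c i * c j * JTan (u i) (u j) = 0 :=
    Finset.sum_eq_zero fun i hi => Finset.sum_eq_zero fun j hj => by
      rw [hJwv i (hmemW i hi) j (hmemV j hj), mul_zero]
  have hVW : ∑ i ∈ V, ∑ j ∈ W, c i * c j * JTan (u i) (u j) = 0 :=
    Finset.sum_eq_zero fun i hi => Finset.sum_eq_zero fun j hj => by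
      rw [hJvw i (hmemV i hi) j (hmemW j hj), mul_zero]
  have hWW : 0 ≤ ∑ i ∈ W, ∑ j ∈ W, c i * c j * JTan (u i) (u j) := by
    have hr0 : ∀ i ∈ W, ∀ j ∈ W,
        0 ≤ (∑ q, min (u i q) (u j q)) / (N i + N j) := fun i hi j hj =>
      div_nonneg (hS0 i j) (add_pos (hmemW i hi) (hmemW j hj)).le
    have hr1 : ∀ i ∈ W, ∀ j ∈ W,
        (∑ q, min (u i q) (u j q)) / (N i + N j) < 1 := by
      intro i hi j hj
      exact (div_lt_one (add_pos (hmemW i hi) (hmemW j hj))).2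
        (lt_of_le_of_lt (hSle i j) (lt_add_of_pos_right _ (hmemW j hj)))
    have hJval : ∀ i ∈ W, ∀ j ∈ W, c i * c j * JTan (u i) (u j)
        = ∑' p : ℕ, c i * c j *
          ((∑ q, min (u i q) (u j q)) / (N i + N j)) ^ (p + 1) := by
      intro i hi j hj
      have hT : 0 < N i + N j := add_pos (hmemW i hi) (hmemW j hj)
      have hSlt : (∑ q, min (u i q) (u j q)) < N i + N j :=
        lt_of_le_of_lt (hSle i j) (lt_add_of_pos_right _ (hmemW j hj))
      have hgeom : ∑' p : ℕ, ((∑ q, min (u i q) (u j q)) / (N i + N j)) ^ (p + 1)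
          = (∑ q, min (u i q) (u j q)) / (N i + N j - ∑ q, min (u i q) (u j q)) := by
        have h1 : ∑' p : ℕ, ((∑ q, min (u i q) (u j q)) / (N i + N j)) ^ (p + 1)
            = ((∑ q, min (u i q) (u j q)) / (N i + N j)) *
              ∑' p : ℕ, ((∑ q, min (u i q) (u j q)) / (N i + N j)) ^ p := by
          rw [← tsum_mul_left]
          exact tsum_congr fun p => pow_succ' _ _
        rw [h1, tsum_geometric_of_lt_one (hr0 i hi j hj) (hr1 i hi j hj)]
        have hTS : N i + N j - (∑ q, min (u i q) (u j q)) ≠ 0 := (sub_pos.2 hSlt).ne'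
        have h1ne : (1 : ℝ) - (∑ q, min (u i q) (u j q)) / (N i + N j) ≠ 0 :=
          (sub_pos.2 (hr1 i hi j hj)).ne'
        field_simp
      have hmaxpos : 0 < ∑ q, max (u i q) (u j q) := by
        rw [hmax i j]; linarith
      have hJ : JTan (u i) (u j)
          = (∑ q, min (u i q) (u j q)) / (N i + N j - ∑ q, min (u i q) (u j q)) := by
        simp only [JTan]
        rw [if_pos hmaxpos, hmax i j]
      rw [hJ, ← hgeom, tsum_mul_left]
    have hsumm : ∀ i ∈ W, ∀ j ∈ W, Summable (fun p : ℕ => c i * c j *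
        ((∑ q, min (u i q) (u j q)) / (N i + N j)) ^ (p + 1)) := by
      intro i hi j hj
      have he : (fun p : ℕ => c i * c j *
          ((∑ q, min (u i q) (u j q)) / (N i + N j)) ^ (p + 1))
          = fun p : ℕ => (c i * c j * ((∑ q, min (u i q) (u j q)) / (N i + N j)))
            * ((∑ q, min (u i q) (u j q)) / (N i + N j)) ^ p := by
        funext p; ring
      rw [he]
      exact (summable_geometric_of_lt_one (hr0 i hi j hj) (hr1 i hi j hj)).mul_left _
    have hswap : ∑ i ∈ W, ∑ j ∈ W, c i * c j * JTan (u i) (u j)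
        = ∑' p : ℕ, ∑ i ∈ W, ∑ j ∈ W, c i * c j *
          ((∑ q, min (u i q) (u j q)) / (N i + N j)) ^ (p + 1) :=
      calc ∑ i ∈ W, ∑ j ∈ W, c i * c j * JTan (u i) (u j)
          = ∑ i ∈ W, ∑ j ∈ W, ∑' p : ℕ, c i * c j *
            ((∑ q, min (u i q) (u j q)) / (N i + N j)) ^ (p + 1) :=
            Finset.sum_congr rfl fun i hi => Finset.sum_congr rfl fun j hj => hJval i hi j hj
        _ = ∑ i ∈ W, ∑' p : ℕ, ∑ j ∈ W, c i * c j *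
            ((∑ q, min (u i q) (u j q)) / (N i + N j)) ^ (p + 1) :=
            Finset.sum_congr rfl fun i hi => (Summable.tsum_finsetSum (fun j hj => hsumm i hi j hj)).symm
        _ = ∑' p : ℕ, ∑ i ∈ W, ∑ j ∈ W, c i * c j *
            ((∑ q, min (u i q) (u j q)) / (N i + N j)) ^ (p + 1) :=
            (Summable.tsum_finsetSum (fun i hi => summable_sum (fun j hj => hsumm i hi j hj))).symm
    rw [hswap]
    refine tsum_nonneg fun p => ?_
    have hmemW' : ∀ i ∈ W, 0 < ∑ q, u i q := hmemW
    exact pow_psd u hu W hmemW' (p + 1) c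
  rw [expand, hWV, hVW]
  have := add_nonneg hWW hVV
  linarith


end TanimotoAux

/-- For a partition `B₀,…,B_{K−1}` of ℝ into pairwise disjoint sets covering ℝ, the
multistate Tanimoto kernel is positive semidefinite on `ℝⁿ`: for any
`X₁,…,X_m ∈ ℝⁿ` and real coefficients `c₁,…,c_m`,
`Σᵢ Σⱼ cᵢ cⱼ K_multi(Xᵢ,Xⱼ) ≥ 0`. -/
theorem Kmulti_psd {n K m : ℕ} (B : Fin K → Set ℝ)
    (hdisj : ∀ k l, k ≠ l → Disjoint (B k) (B l))
    (hcover : ∀ x : ℝ, ∃ k, x ∈ B k)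
    (X : Fin m → Fin n → ℝ) (c : Fin m → ℝ) :
    0 ≤ ∑ i : Fin m, ∑ j : Fin m, c i * c j * Kmulti B (X i) (X j) := by
  have h := jtan_psd (fun i => psi B (X i))
    (fun i q => Set.indicator_nonneg (fun _ _ => abs_nonneg _) _) c
  simpa [Kmulti] using h
end
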